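/- Let t ∈ (0,1) be rational and u, v ∈ {A,B}⁺. If ρ(u·Z') = t and ρ̄(v·Z') = 1 − t, then u = v. -/

import Mathlib

inductive L3 where
  | A : L3
  | B : L3
  | Z' : L3
deriving DecidableEq

def theta : L3 → ℚ
  | L3.A => 1
  | L3.B => 0
  | L3.Z' => 1

def thetaBar : L3 → ℚ
  | L3.A => 0
  | L3.B => 1
  | L3.Z' => 1

def rho : List L3 → ℚ
  | [] => 0
  | x :: w => theta x * (1/2) + (1/2) * rho w

def rhoBar : List L3 → ℚ
  | [] => 0
  | x :: w => thetaBar x * (1/2) + (1/2) * rhoBar w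

lemma rho_bounds : ∀ w : List L3, (∀ x ∈ w, x = L3.A ∨ x = L3.B) →
    0 < rho (w ++ [L3.Z']) ∧ rho (w ++ [L3.Z']) < 1 := by
  intro w
  induction w with
  | nil => intro _; simp [rho, theta]; norm_num
  | cons x w ih =>
    intro h
    obtain ⟨h1, h2⟩ := ih (fun y hy => h y (List.mem_cons_of_mem _ hy))
    rcases h x List.mem_cons_self with hx | hx <;> subst hx <;>
      simp only [List.cons_append, rho, theta, List.append_eq] <;> constructor <;> linarith

lemma rho_add_rhoBar : ∀ w : List L3, (∀ x ∈ w, x = L3.A ∨ x = L3.B) →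
    rho (w ++ [L3.Z']) + rhoBar (w ++ [L3.Z']) = 1 := by
  intro w
  induction w with
  | nil => intro _; simp [rho, rhoBar, theta, thetaBar]; norm_num
  | cons x w ih =>
    intro h
    have := ih (fun y hy => h y (List.mem_cons_of_mem _ hy))
    rcases h x List.mem_cons_self with hx | hx <;> subst hx <;>
      simp only [List.cons_append, rho, rhoBar, theta, thetaBar, List.append_eq] <;> linarith

lemma rho_inj : ∀ u v : List L3, (∀ x ∈ u, x = L3.A ∨ x = L3.B) →
    (∀ x ∈ v, x = L3.A ∨ x = L3.B) →
    rho (u ++ [L3.Z']) = rho (v ++ [L3.Z']) → u = v := by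
  intro u
  induction u with
  | nil =>
    intro v _ hv heq
    cases v with
    | nil => rfl
    | cons y v =>
      exfalso
      obtain ⟨h1, h2⟩ := rho_bounds v (fun z hz => hv z (List.mem_cons_of_mem _ hz))
      simp only [List.nil_append, List.cons_append, rho, theta, List.append_eq] at heq
      rcases hv y List.mem_cons_self with hy | hy <;> subst hy <;>
        simp [rho, theta] at heq <;> linarith
  | cons x u ih =>
    intro v hu hv heq
    cases v with
    | nil =>
      exfalso
      obtain ⟨h1, h2⟩ := rho_bounds u (fun z hz => hu z (List.mem_cons_of_mem _ hz))
      simp only [List.nil_append, List.cons_append, rho, theta, List.append_eq] at heq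
      rcases hu x List.mem_cons_self with hx | hx <;> subst hx <;>
        simp [rho, theta] at heq <;> linarith
    | cons y v =>
      obtain ⟨hu1, hu2⟩ := rho_bounds u (fun z hz => hu z (List.mem_cons_of_mem _ hz))
      obtain ⟨hv1, hv2⟩ := rho_bounds v (fun z hz => hv z (List.mem_cons_of_mem _ hz))
      simp only [List.cons_append, rho, List.append_eq] at heq
      have hx := hu x List.mem_cons_self
      have hy := hv y List.mem_cons_self
      have hxy : x = y ∧ rho (u ++ [L3.Z']) = rho (v ++ [L3.Z']) := by
        rcases hx with hx | hx <;> rcases hy with hy | hy <;> subst hx <;> subst hy <;>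
          simp only [theta] at heq <;> constructor <;> first | rfl | linarith
      rw [hxy.1, ih v (fun z hz => hu z (List.mem_cons_of_mem _ hz))
        (fun z hz => hv z (List.mem_cons_of_mem _ hz)) hxy.2]

/-- Let t ∈ (0,1) be rational and u, v nonempty words over {A,B}. If ρ(u·Z') = t and
ρ̄(v·Z') = 1 − t, then u = v. -/
theorem rho_rhoBar_match_imp_eq (t : ℚ) (ht : 0 < t ∧ t < 1) (u v : List L3)
    (hu : ∀ x ∈ u, x = L3.A ∨ x = L3.B) (hv : ∀ x ∈ v, x = L3.A ∨ x = L3.B)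
    (hune : u ≠ []) (hvne : v ≠ [])
    (h1 : rho (u ++ [L3.Z']) = t) (h2 : rhoBar (v ++ [L3.Z']) = 1 - t) : u = v := by
  have hsum := rho_add_rhoBar v hv
  have : rho (v ++ [L3.Z']) = t := by linarith
  exact rho_inj u v hu hv (by rw [h1, this])
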